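/- Non-truthfulness witness for greedy OSM: consider 2 agents and 2 items. True profile v: w(1,1)=1+ε, w(1,2)=1, w(2,1)=1, w(2,2)=1−ε; the greedy algorithm (repeatedly pick the agent with the highest-value available item) matches agent 1 to item 1 and agent 2 to item 2. Misreported profile (v'_1, v_2): w'(1,1)=1−ε, w'(1,2)=0; greedy matches agent 2 to item 1 and agent 1 to item 2. Then v_1(first outcome for agent 1) + v'_1(second outcome for agent 1) = (1+ε) + 0 < 1 + (1−ε) = v_1(second) + v'_1(first) for ε < 1/2, violating the 2-cycle monotonicity condition; hence the greedy matching algorithm admits no truthful payment scheme. -/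
import Mathlib


/-- non-truthfulness witness for greedy OSM on 2 agents and 2 items.
`M` is the greedy matching algorithm: for each weight profile it outputs a perfect
matching (a bijection from agents to items) in which some agent is matched to an item
of globally maximum weight (the 2×2 greedy first places the maximum-weight pair).
For the true profile `w` and the profile `w'` in which agent 0 misreports, the
2-cycle monotonicity condition is violated, hence no payment scheme makes `M`
truthful. -/
theorem stmt19 (ε : ℝ) (hε : 0 < ε) (hε2 : ε < 1 / 2)
    (M : (Fin 2 → Fin 2 → ℝ) → (Fin 2 → Fin 2))
    (hM : ∀ W, Function.Bijective (M W) ∧ ∃ i, ∀ a b, W a b ≤ W i (M W i))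
    (w w' : Fin 2 → Fin 2 → ℝ)
    (hw : w = ![![1 + ε, 1], ![1, 1 - ε]])
    (hw' : w' = ![![1 - ε, 0], ![1, 1 - ε]]) :
    (w 0 (M w 0) + w' 0 (M w' 0) < w 0 (M w' 0) + w' 0 (M w 0)) ∧
      ¬ ∃ p : Fin 2 → (Fin 2 → Fin 2 → ℝ) → ℝ,
          ∀ (W : Fin 2 → Fin 2 → ℝ) (i : Fin 2) (Wi' : Fin 2 → ℝ),
            W i (M (Function.update W i Wi') i) - p i (Function.update W i Wi')
              ≤ W i (M W i) - p i W := by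
  have two : ∀ k : Fin 2, k = 0 ∨ k = 1 := by decide
  -- M w 0 = 0
  obtain ⟨hb, i, hi⟩ := hM w
  have h0 : M w 0 = 0 := by
    have hv := hi 0 0
    rcases two i with hi0 | hi1
    · subst hi0
      rcases two (M w 0) with h | h
      · exact h
      · rw [h, hw] at hv; simp at hv; linarith
    · subst hi1
      rcases two (M w 1) with h | h <;> rw [h, hw] at hv <;> simp at hv <;> linarith
  -- M w' 0 = 1
  obtain ⟨hb', j, hj⟩ := hM w'
  have h1 : M w' 0 = 1 := by
    have hj1 : j = 1 := by
      have hv := hj 1 0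
      rcases two j with hj0 | hj1
      · subst hj0
        rcases two (M w' 0) with h | h <;> rw [h, hw'] at hv <;> simp at hv <;> linarith
      · exact hj1
    subst hj1
    have hv := hj 1 0
    have h10 : M w' 1 = 0 := by
      rcases two (M w' 1) with h | h
      · exact h
      · rw [h, hw'] at hv; simp at hv; linarith
    rcases two (M w' 0) with h | h
    · exact absurd (hb'.1 (h.trans h10.symm)) (by decide)
    · exact h
  have hupd : Function.update w 0 (w' 0) = w' := by
    funext a b
    rcases two a with ha | ha <;> subst ha <;>
      simp [Function.update, hw, hw']
  have hupd' : Function.update w' 0 (w 0) = w := by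
    funext a b
    rcases two a with ha | ha <;> subst ha <;>
      simp [Function.update, hw, hw']
  constructor
  · rw [h0, h1, hw, hw']; simp; linarith
  · rintro ⟨p, hp⟩
    have A := hp w 0 (w' 0)
    have B := hp w' 0 (w 0)
    rw [hupd] at A
    rw [hupd'] at B
    rw [h0, h1] at A B
    rw [hw, hw'] at A B
    simp at A B
    linarith
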